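/- arXiv:2002.04783 — 5 statements merged into one kernel-verified Lean document; each statement's English description precedes it below -/
import Mathlib

section
/- Let θ_0 = 1 and θ_{t+1} = θ_t(√(θ_t² + 4) − θ_t)/2 for all t ≥ 0. Then 0 < θ_t ≤ 2/(t+2) for all t ≥ 0. -/
theorem theta_bound (θ : ℕ → ℝ) (h0 : θ 0 = 1)
    (hrec : ∀ t : ℕ, θ (t + 1) = θ t * (Real.sqrt ((θ t) ^ 2 + 4) - θ t) / 2) :
    ∀ t : ℕ, 0 < θ t ∧ θ t ≤ 2 / (t + 2) := by
  intro t
  induction t with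
  | zero => constructor <;> norm_num [h0]
  | succ t ih =>
    obtain ⟨hp, hb⟩ := ih
    set x := θ t with hx
    set y := θ (t + 1) with hy
    have hs0 : (0:ℝ) ≤ x ^ 2 + 4 := by positivity
    have hs : Real.sqrt (x ^ 2 + 4) ^ 2 = x ^ 2 + 4 := Real.sq_sqrt hs0
    have hsnn : 0 ≤ Real.sqrt (x ^ 2 + 4) := Real.sqrt_nonneg _
    have hsgt : x < Real.sqrt (x ^ 2 + 4) := by nlinarith
    have hrec' : y = x * (Real.sqrt (x ^ 2 + 4) - x) / 2 := hrec t
    have hyp : 0 < y := by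
      rw [hrec']
      apply div_pos (mul_pos hp (by linarith)) (by norm_num)
    have hkey : y ^ 2 + y * x ^ 2 = x ^ 2 := by nlinarith [hs, hrec']
    refine ⟨hyp, ?_⟩
    have hn : (0:ℝ) ≤ (t : ℝ) := Nat.cast_nonneg t
    have h2 : (0:ℝ) < (t:ℝ) + 2 := by linarith
    have h3 : (0:ℝ) < (t:ℝ) + 3 := by linarith
    have hxb : x * ((t:ℝ) + 2) ≤ 2 := by
      have := (le_div_iff₀ h2).mp hb
      linarith
    have h1y : 0 < 1 - y := by nlinarith [mul_pos hyp hyp, mul_pos hp hp]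
    have hx2 : x ^ 2 * ((t:ℝ) + 2) ^ 2 ≤ 4 := by nlinarith [mul_pos hp h2]
    have hA : y ^ 2 * ((t:ℝ) + 2) ^ 2 ≤ 4 * (1 - y) := by
      nlinarith [mul_le_mul_of_nonneg_right hx2 h1y.le]
    rw [Nat.cast_add, Nat.cast_one]
    rw [show ((t:ℝ) + 1 + 2) = (t:ℝ) + 3 by ring, le_div_iff₀ h3]
    by_contra hcon
    push_neg at hcon
    have hC : (1 - y) * ((t:ℝ) + 3) < (t:ℝ) + 1 := by nlinarith
    have hD : y ^ 2 * ((t:ℝ) + 2) ^ 2 * ((t:ℝ) + 3) < 4 * ((t:ℝ) + 1) := by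
      nlinarith [mul_le_mul_of_nonneg_right hA h3.le]
    have hE : y ^ 2 * ((t:ℝ) + 2) ^ 2 * ((t:ℝ) + 3) ^ 2 < 4 * ((t:ℝ) + 1) * ((t:ℝ) + 3) := by
      have h := mul_lt_mul_of_pos_right hD h3
      calc y ^ 2 * ((t:ℝ) + 2) ^ 2 * ((t:ℝ) + 3) ^ 2
          = y ^ 2 * ((t:ℝ) + 2) ^ 2 * ((t:ℝ) + 3) * ((t:ℝ) + 3) := by ring
        _ < 4 * ((t:ℝ) + 1) * ((t:ℝ) + 3) := h
    have hB : 4 < y ^ 2 * ((t:ℝ) + 3) ^ 2 := by nlinarith [mul_pos hyp h3]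
    have hF : 4 * ((t:ℝ) + 2) ^ 2 < y ^ 2 * ((t:ℝ) + 2) ^ 2 * ((t:ℝ) + 3) ^ 2 := by
      have h := mul_lt_mul_of_pos_right hB (show (0:ℝ) < ((t:ℝ) + 2) ^ 2 by positivity)
      calc 4 * ((t:ℝ) + 2) ^ 2 < y ^ 2 * ((t:ℝ) + 3) ^ 2 * ((t:ℝ) + 2) ^ 2 := h
        _ = y ^ 2 * ((t:ℝ) + 2) ^ 2 * ((t:ℝ) + 3) ^ 2 := by ring
    have hG : (4:ℝ) * ((t:ℝ) + 2) ^ 2 < 4 * ((t:ℝ) + 1) * ((t:ℝ) + 3) := lt_trans hF hE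
    have : (4:ℝ) * ((t:ℝ) + 2) ^ 2 = 4 * ((t:ℝ) + 1) * ((t:ℝ) + 3) + 4 := by ring
    linarith
end

section
/- A {−1,0,1}-valued matrix A in which every column has at most two nonzero entries is totally unimodular provided its rows can be partitioned into two sets I₁ and I₂ such that: if two nonzero entries of a column have the same sign, their rows lie in different sets, and if they have opposite signs, their rows lie in the same set. -/
/-- A matrix with integer entries is totally unimodular if every square submatrix
(given by injective choices of rows and columns) has determinant in {-1, 0, 1}. -/
def IsTotallyUnimodular' {m n : ℕ} (A : Matrix (Fin m) (Fin n) ℤ) : Prop :=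
  ∀ (k : ℕ) (f : Fin k → Fin m) (g : Fin k → Fin n),
    Function.Injective f → Function.Injective g →
      (A.submatrix f g).det ∈ ({-1, 0, 1} : Set ℤ)

private lemma cancel_aux (b₁ b₂ : Bool) (a₁ a₂ : ℤ) (h1 : a₁ = -1 ∨ a₁ = 1)
    (h2 : a₂ = -1 ∨ a₂ = 1) (hs : a₁ = a₂ → b₁ ≠ b₂) (hd : a₁ ≠ a₂ → b₁ = b₂) :
    (if b₁ then (1:ℤ) else -1) * a₁ + (if b₂ then (1:ℤ) else -1) * a₂ = 0 := by
  rcases h1 with rfl | rfl <;> rcases h2 with rfl | rfl <;>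
    cases b₁ <;> cases b₂ <;> simp_all

theorem two_nonzeros_partition_TU {m n : ℕ} (A : Matrix (Fin m) (Fin n) ℤ)
    (hval : ∀ i j, A i j ∈ ({-1, 0, 1} : Set ℤ))
    (hcol : ∀ j : Fin n, ({i : Fin m | A i j ≠ 0} : Finset (Fin m)).card ≤ 2)
    (hpart : ∃ p : Fin m → Bool, ∀ (j : Fin n) (i₁ i₂ : Fin m), i₁ ≠ i₂ →
      A i₁ j ≠ 0 → A i₂ j ≠ 0 →
        (A i₁ j = A i₂ j → p i₁ ≠ p i₂) ∧ (A i₁ j ≠ A i₂ j → p i₁ = p i₂)) :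
    IsTotallyUnimodular' A := by
  obtain ⟨p, hp⟩ := hpart
  intro k
  induction k with
  | zero =>
    intro f g _ _
    simp [Matrix.det_fin_zero]
  | succ k ih =>
    intro f g hf hg
    set M := A.submatrix f g with hM
    by_cases hall : ∀ c : Fin (k+1), ∃ r₁ r₂ : Fin (k+1),
        r₁ ≠ r₂ ∧ M r₁ c ≠ 0 ∧ M r₂ c ≠ 0
    · -- every column of the submatrix has two nonzeros; rows are dependent
      have hdet : M.det = 0 := by
        rw [← Matrix.exists_vecMul_eq_zero_iff]
        refine ⟨fun r => if p (f r) then 1 else -1, ?_, ?_⟩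
        · intro h0
          have h00 := congrFun h0 0
          by_cases hb : p (f 0) <;> simp [hb] at h00
        · funext c
          obtain ⟨r₁, r₂, hrne, h1, h2⟩ := hall c
          have hfne : f r₁ ≠ f r₂ := fun h => hrne (hf h)
          -- the nonzero set of column (g c) is exactly {f r₁, f r₂}
          have hsub : ({f r₁, f r₂} : Finset (Fin m)) ⊆
              ({i : Fin m | A i (g c) ≠ 0} : Finset (Fin m)) := by
            intro i hi
            simp only [Finset.mem_insert, Finset.mem_singleton] at hi
            rcases hi with rfl | rfl
            · simpa [hM] using h1
            · simpa [hM] using h2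
          have hcard : (({f r₁, f r₂} : Finset (Fin m))).card = 2 := by
            rw [Finset.card_insert_of_notMem (by simpa using hfne),
              Finset.card_singleton]
          have hSeq : ({f r₁, f r₂} : Finset (Fin m)) =
              ({i : Fin m | A i (g c) ≠ 0} : Finset (Fin m)) :=
            Finset.eq_of_subset_of_card_le hsub (by rw [hcard]; exact hcol (g c))
          have honly : ∀ r : Fin (k+1), M r c ≠ 0 → r = r₁ ∨ r = r₂ := by
            intro r hr
            have : f r ∈ ({f r₁, f r₂} : Finset (Fin m)) := by
              rw [hSeq]
              simpa [hM] using hr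
            simp only [Finset.mem_insert, Finset.mem_singleton] at this
            rcases this with h | h
            · exact Or.inl (hf h)
            · exact Or.inr (hf h)
          show Matrix.vecMul (fun r => if p (f r) then (1:ℤ) else -1) M c = 0
          simp only [Matrix.vecMul, dotProduct]
          have hrestrict : ∑ r : Fin (k+1), (if p (f r) then (1:ℤ) else -1) * M r c =
              ∑ r ∈ ({r₁, r₂} : Finset (Fin (k+1))),
                (if p (f r) then (1:ℤ) else -1) * M r c := by
            refine (Finset.sum_subset (Finset.subset_univ _) ?_).symm
            intro r _ hr
            simp only [Finset.mem_insert, Finset.mem_singleton, not_or] at hr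
            have : M r c = 0 := by
              by_contra h
              rcases honly r h with h' | h' <;> simp_all
            simp [this]
          rw [hrestrict, Finset.sum_pair hrne]
          have hspec := hp (g c) (f r₁) (f r₂) hfne (by simpa [hM] using h1) (by simpa [hM] using h2)
          have hv1 := hval (f r₁) (g c)
          have hv2 := hval (f r₂) (g c)
          simp only [Set.mem_insert_iff, Set.mem_singleton_iff] at hv1 hv2
          have hM1 : M r₁ c = A (f r₁) (g c) := rfl
          have hM2 : M r₂ c = A (f r₂) (g c) := rfl
          rw [hM1, hM2]
          have hne1 : A (f r₁) (g c) ≠ 0 := by simpa [hM] using h1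
          have hne2 : A (f r₂) (g c) ≠ 0 := by simpa [hM] using h2
          refine cancel_aux _ _ _ _ ?_ ?_ hspec.1 hspec.2
          · rcases hv1 with e | e | e
            exacts [Or.inl e, absurd e hne1, Or.inr e]
          · rcases hv2 with e | e | e
            exacts [Or.inl e, absurd e hne2, Or.inr e]
      simp only [Set.mem_insert_iff, Set.mem_singleton_iff]
      exact Or.inr (Or.inl hdet)
    · push_neg at hall
      obtain ⟨c, hc⟩ := hall
      by_cases hz : ∀ r, M r c = 0
      · have h0 : M.det = 0 := Matrix.det_eq_zero_of_column_eq_zero c hz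
        simp only [Set.mem_insert_iff, Set.mem_singleton_iff]
        exact Or.inr (Or.inl h0)
      · push_neg at hz
        obtain ⟨r, hr⟩ := hz
        have honly : ∀ r' : Fin (k+1), r' ≠ r → M r' c = 0 := by
          intro r' hr'
          exact hc r r' (Ne.symm hr') hr
        rw [Matrix.det_succ_column M c]
        rw [Finset.sum_eq_single r
          (fun b _ hb => by simp [honly b hb])
          (fun h => absurd (Finset.mem_univ r) h)]
        have hsub : M.submatrix r.succAbove c.succAbove =
            A.submatrix (f ∘ r.succAbove) (g ∘ c.succAbove) := by
          rw [hM, Matrix.submatrix_submatrix]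
        have hdsub := ih (f ∘ r.succAbove) (g ∘ c.succAbove)
          (hf.comp (Fin.succAbove_right_injective))
          (hg.comp (Fin.succAbove_right_injective))
        rw [← hsub] at hdsub
        have hvr := hval (f r) (g c)
        have hMr : M r c = A (f r) (g c) := rfl
        simp only [Set.mem_insert_iff, Set.mem_singleton_iff] at hdsub hvr ⊢
        rcases neg_one_pow_eq_or ℤ (r + c : ℕ) with hpow | hpow <;>
          rw [hpow] <;>
          rcases hvr with e | e | e <;>
            first
              | exact absurd (hMr.trans e) hr
              | (rw [hMr, e]; rcases hdsub with d | d | d <;> rw [d] <;> norm_num)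
end

section
/- (Ghouila-Houri, one direction) If an m×n matrix A with entries in {−1,0,1} is totally unimodular, then for every subset I of the rows there exists a partition I = I₁ ∪ I₂ (disjoint) such that for every column j, Σ_{i∈I₁} A_{ij} − Σ_{i∈I₂} A_{ij} ∈ {−1, 0, 1}. -/
open Matrix Module Submodule


lemma tu_fromRows_neg {m' n' : Type*} {A : Matrix m' n' ℤ} (hA : A.IsTotallyUnimodular) :
    (fromRows A (-A)).IsTotallyUnimodular := by
  rw [isTotallyUnimodular_iff]
  intro k f g
  have hA' := (isTotallyUnimodular_iff A).mp hA
  set f' : Fin k → m' := fun i => (f i).elim id id with hf'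
  set ε : Fin k → ℤ := fun i => (f i).elim (fun _ => 1) (fun _ => -1) with hε
  have hεval : ∀ i, ε i = 1 ∨ ε i = -1 := by
    intro i; rw [hε]; cases h : f i <;> simp [h]
  have key : (fromRows A (-A)).submatrix f g =
      Matrix.of (fun i j => ε i * (A.submatrix f' g i j)) := by
    ext i j
    cases h : f i with
    | inl a => simp [h, hf', hε, Matrix.submatrix_apply]
    | inr a => simp [h, hf', hε, Matrix.submatrix_apply]
  rw [key, det_mul_column]
  have hprod : (∏ i, ε i) = 1 ∨ (∏ i, ε i) = -1 := by
    apply mul_self_eq_one_iff.mp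
    rw [← Finset.prod_mul_distrib]
    exact Finset.prod_eq_one (fun i _ => by rcases hεval i with h | h <;> rw [h] <;> norm_num)
  obtain ⟨s, hs⟩ := hA' k f' g
  rcases hprod with h | h
  · exact ⟨s, by rw [h, hs, one_mul]⟩
  · exact ⟨-s, by rw [h, ← hs]; cases s <;> simp⟩

lemma G0_TU {m n : ℕ} {A : Matrix (Fin m) (Fin n) ℤ} (hA : A.IsTotallyUnimodular) :
    (fromRows (fromRows Aᵀ (-Aᵀ))
      (fromRows (1 : Matrix (Fin m) (Fin m) ℤ) (-1 : Matrix (Fin m) (Fin m) ℤ))).IsTotallyUnimodular := by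
  refine Matrix.IsTotallyUnimodular.fromRows_unitlike (tu_fromRows_neg hA.transpose) ?_
  rintro - (i | i)
  · exact ⟨i, 1, funext fun j => by
      simp [Matrix.one_apply, Pi.single_apply, eq_comm]⟩
  · exact ⟨i, -1, funext fun j => by
      simp [Matrix.one_apply, Pi.single_apply, eq_comm, apply_ite Neg.neg]⟩


lemma purify {J' ι : Type*} [Fintype J'] [Fintype ι] [DecidableEq J']
    (G : Matrix J' ι ℚ) (b : J' → ℚ)
    (hpos : ∀ w : ι → ℚ, w ≠ 0 → ∃ jj, 0 < G.mulVec w jj) :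
    ∀ d : ℕ, ∀ x : ι → ℚ, (∀ jj, G.mulVec x jj ≤ b jj) →
      ((Finset.univ.filter (fun jj => G.mulVec x jj ≠ b jj)).card ≤ d) →
      ∃ y : ι → ℚ, (∀ jj, G.mulVec y jj ≤ b jj) ∧
        ∀ w : ι → ℚ, (∀ jj, G.mulVec y jj = b jj → G.mulVec w jj = 0) → w = 0 := by
  intro d
  induction d with
  | zero =>
    intro x hx hcard
    refine ⟨x, hx, fun w hw => ?_⟩
    by_contra hwne
    obtain ⟨jj, hjj⟩ := hpos w hwne
    have h1 : G.mulVec x jj ≠ b jj := fun h => by simp [hw jj h] at hjj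
    have h2 : jj ∈ Finset.univ.filter (fun jj => G.mulVec x jj ≠ b jj) := by simp [h1]
    rw [Nat.le_zero, Finset.card_eq_zero] at hcard
    simp [hcard] at h2
  | succ d ih =>
    intro x hx hcard
    by_cases hker : ∀ w : ι → ℚ, (∀ jj, G.mulVec x jj = b jj → G.mulVec w jj = 0) → w = 0
    · exact ⟨x, hx, hker⟩
    push_neg at hker
    obtain ⟨w, hw, hwne⟩ := hker
    obtain ⟨jj₀, hjj₀⟩ := hpos w hwne
    have hnt : ∀ jj, 0 < G.mulVec w jj → G.mulVec x jj ≠ b jj :=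
      fun jj hp h => by simp [hw jj h] at hp
    set S : Finset J' :=
      Finset.univ.filter (fun jj => G.mulVec x jj ≠ b jj ∧ 0 < G.mulVec w jj) with hS
    have hjj₀S : jj₀ ∈ S := by simp [hS, hnt jj₀ hjj₀, hjj₀]
    obtain ⟨j₁, hj₁S, hmin⟩ :=
      S.exists_min_image (fun jj => (b jj - G.mulVec x jj) / G.mulVec w jj) ⟨jj₀, hjj₀S⟩
    rw [hS, Finset.mem_filter] at hj₁S
    obtain ⟨-, hne₁, hpos₁⟩ := hj₁S
    set t := (b j₁ - G.mulVec x j₁) / G.mulVec w j₁ with ht_def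
    have hbx₁ : 0 < b j₁ - G.mulVec x j₁ := sub_pos.mpr (lt_of_le_of_ne (hx j₁) hne₁)
    have ht : 0 < t := div_pos hbx₁ hpos₁
    set y := x + t • w with hy
    have hmv : ∀ jj, G.mulVec y jj = G.mulVec x jj + t * G.mulVec w jj := by
      intro jj; rw [hy, Matrix.mulVec_add, Matrix.mulVec_smul]; simp
    have hyfeas : ∀ jj, G.mulVec y jj ≤ b jj := by
      intro jj
      rcases le_or_gt (G.mulVec w jj) 0 with h | h
      · have h2 := mul_nonpos_of_nonneg_of_nonpos ht.le h
        rw [hmv]; linarith [hx jj]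
      · have hjjS : jj ∈ S := by simp [hS, hnt jj h, h]
        have h3 := hmin jj hjjS
        have h4 := (le_div_iff₀ h).mp h3
        rw [hmv]; linarith
    have htight : ∀ jj, G.mulVec x jj = b jj → G.mulVec y jj = b jj := by
      intro jj hjj; rw [hmv, hw jj hjj, mul_zero, add_zero, hjj]
    have hj₁y : G.mulVec y j₁ = b j₁ := by
      rw [hmv, ht_def, div_mul_cancel₀ _ (ne_of_gt hpos₁)]; ring
    apply ih y hyfeas
    have hsub : Finset.univ.filter (fun jj => G.mulVec y jj ≠ b jj) ⊆
        (Finset.univ.filter (fun jj => G.mulVec x jj ≠ b jj)).erase j₁ := by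
      intro jj hjj
      simp only [Finset.mem_filter, Finset.mem_erase, Finset.mem_univ, true_and] at *
      refine ⟨?_, fun h => hjj (htight jj h)⟩
      rintro rfl; exact hjj hj₁y
    have hj₁mem : j₁ ∈ Finset.univ.filter (fun jj => G.mulVec x jj ≠ b jj) := by simp [hne₁]
    have h5 := Finset.card_le_card hsub
    rw [Finset.card_erase_of_mem hj₁mem] at h5
    have h6 : 1 ≤ (Finset.univ.filter (fun jj => G.mulVec x jj ≠ b jj)).card :=
      Finset.card_pos.mpr ⟨j₁, hj₁mem⟩
    omega


lemma exists_rows_basis {ι J' : Type*} [Fintype ι] [Fintype J'] [DecidableEq ι]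
    (M : Matrix J' ι ℚ) (hM : ∀ w : ι → ℚ, M.mulVec w = 0 → w = 0) :
    ∃ f : ι → J', IsUnit (M.submatrix f id) := by
  classical
  have hinj : Function.Injective M.mulVecLin := by
    rw [← LinearMap.ker_eq_bot, LinearMap.ker_eq_bot']
    intro w hw; exact hM w hw
  have hrank : M.rank = Fintype.card ι := by
    rw [Matrix.rank, LinearMap.finrank_range_of_inj hinj, Module.finrank_fintype_fun_eq_card]
  have hrankT : Mᵀ.rank = Fintype.card ι := by rw [Matrix.rank_transpose]; exact hrank
  have hspan : Submodule.span ℚ (Set.range (fun j => M j)) = ⊤ := by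
    have h1 : finrank ℚ (Submodule.span ℚ (Set.range Mᵀᵀ)) = Fintype.card ι := by
      have h := hrankT; rw [Matrix.rank, Matrix.range_mulVecLin] at h; exact h
    rw [transpose_transpose] at h1
    apply Submodule.eq_top_of_finrank_eq
    rw [h1, Module.finrank_fintype_fun_eq_card]
  obtain ⟨tset, hts, htspan, htind⟩ := exists_linearIndependent ℚ (Set.range (fun j => M j))
  rw [hspan] at htspan
  have htfin : tset.Finite := htind.setFinite
  haveI := htfin.fintype
  have hcard : tset.toFinset.card = Fintype.card ι := by
    have h2 := finrank_span_set_eq_card htind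
    rw [htspan, finrank_top, Module.finrank_fintype_fun_eq_card] at h2
    omega
  have hcard2 : Fintype.card ι = Fintype.card tset := by
    rw [← Set.toFinset_card, hcard]
  let e : ι ≃ tset := Fintype.equivOfCardEq hcard2
  have hpick : ∀ v : tset, ∃ j : J', M j = (v : ι → ℚ) := fun v => hts v.2
  choose pick hpick using hpick
  refine ⟨fun i => pick (e i), ?_⟩
  rw [← Matrix.linearIndependent_rows_iff_isUnit]
  have hrows : (fun i => M.submatrix (fun i => pick (e i)) id i) = fun i => ((e i : ι → ℚ)) := by
    funext i; ext j; simp [Matrix.submatrix_apply, hpick (e i)]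
  change LinearIndependent ℚ (fun i => M.submatrix (fun i => pick (e i)) id i)
  rw [hrows]
  exact htind.comp e e.injective

open Finset in
theorem ghouila_houri_necessity {m n : ℕ} (A : Matrix (Fin m) (Fin n) ℤ)
    (hval : ∀ i j, A i j ∈ ({-1, 0, 1} : Set ℤ))
    (hTU : IsTotallyUnimodular' A) :
    ∀ I : Finset (Fin m), ∃ I₁ ⊆ I, ∀ j : Fin n,
      (∑ i ∈ I₁, A i j) - (∑ i ∈ I \ I₁, A i j) ∈ ({-1, 0, 1} : Set ℤ) := by
  classical
  intro I
  have hTU' : A.IsTotallyUnimodular := by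
    intro k f g hf hg
    have h := hTU k f g hf hg
    simp only [Set.mem_insert_iff, Set.mem_singleton_iff] at h
    rcases h with h | h | h
    · exact ⟨-1, by rw [h]; simp⟩
    · exact ⟨0, by rw [h]; simp⟩
    · exact ⟨1, by rw [h]; simp⟩
  set s : Fin n → ℤ := fun j => ∑ i ∈ I, A i j with hs_def
  set q : Fin n → ℤ := fun j => s j / 2 with hq_def
  set r : Fin n → ℤ := fun j => s j % 2 with hr_def
  have hqr : ∀ j, s j = 2 * q j + r j ∧ 0 ≤ r j ∧ r j ≤ 1 := by
    intro j; simp only [hq_def, hr_def]; omega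
  set u : Fin m → ℤ := fun i => if i ∈ I then 1 else 0 with hu_def
  set G₀ : Matrix ((Fin n ⊕ Fin n) ⊕ (Fin m ⊕ Fin m)) (Fin m) ℤ :=
    fromRows (fromRows Aᵀ (-Aᵀ))
      (fromRows (1 : Matrix (Fin m) (Fin m) ℤ) (-1 : Matrix (Fin m) (Fin m) ℤ)) with hG₀_def
  set b₀ : (Fin n ⊕ Fin n) ⊕ (Fin m ⊕ Fin m) → ℤ :=
    Sum.elim (Sum.elim (fun j => q j + r j) (fun j => -(q j))) (Sum.elim u 0) with hb₀_def
  set G : Matrix ((Fin n ⊕ Fin n) ⊕ (Fin m ⊕ Fin m)) (Fin m) ℚ := G₀.map (Int.cast) with hG_def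
  set b : (Fin n ⊕ Fin n) ⊕ (Fin m ⊕ Fin m) → ℚ := fun jj => (b₀ jj : ℚ) with hb_def
  have hmv1 : ∀ (x : Fin m → ℚ) (j : Fin n),
      G.mulVec x (Sum.inl (Sum.inl j)) = ∑ i, (A i j : ℚ) * x i := by
    intro x j; simp [hG_def, hG₀_def, Matrix.mulVec, dotProduct]
  have hmv2 : ∀ (x : Fin m → ℚ) (j : Fin n),
      G.mulVec x (Sum.inl (Sum.inr j)) = -∑ i, (A i j : ℚ) * x i := by
    intro x j; simp [hG_def, hG₀_def, Matrix.mulVec, dotProduct, neg_mul]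
  have hmv3 : ∀ (x : Fin m → ℚ) (i : Fin m),
      G.mulVec x (Sum.inr (Sum.inl i)) = x i := by
    intro x i; simp [hG_def, hG₀_def, Matrix.mulVec, dotProduct, Matrix.one_apply, ite_mul]
  have hmv4 : ∀ (x : Fin m → ℚ) (i : Fin m),
      G.mulVec x (Sum.inr (Sum.inr i)) = -x i := by
    intro x i; simp [hG_def, hG₀_def, Matrix.mulVec, dotProduct, Matrix.one_apply, ite_mul]
  -- initial point
  set x₀ : Fin m → ℚ := fun i => if i ∈ I then (1/2 : ℚ) else 0 with hx₀_def
  have hsumx₀ : ∀ j : Fin n, ∑ i, (A i j : ℚ) * x₀ i = (s j : ℚ)/2 := by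
    intro j
    rw [hs_def]
    push_cast
    rw [Finset.sum_div]
    rw [← Finset.sum_subset (Finset.subset_univ I)
      (fun i _ hi => by simp [hx₀_def, hi])]
    apply Finset.sum_congr rfl
    intro i hi
    simp [hx₀_def, hi]
    ring
  have hx₀feas : ∀ jj, G.mulVec x₀ jj ≤ b jj := by
    rintro ((j | j) | (i | i))
    · rw [hmv1, hsumx₀]
      obtain ⟨h1, h2, h3⟩ := hqr j
      have : (s j : ℚ) = 2 * q j + r j := by exact_mod_cast h1
      simp only [hb_def, hb₀_def, Sum.elim_inl]
      push_cast
      rw [this]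
      have : (0:ℚ) ≤ (r j : ℚ) := by exact_mod_cast h2
      linarith
    · rw [hmv2, hsumx₀]
      obtain ⟨h1, h2, h3⟩ := hqr j
      have h1' : (s j : ℚ) = 2 * q j + r j := by exact_mod_cast h1
      simp only [hb_def, hb₀_def, Sum.elim_inl, Sum.elim_inr]
      push_cast
      rw [h1']
      have : (0:ℚ) ≤ (r j : ℚ) := by exact_mod_cast h2
      linarith
    · rw [hmv3]
      simp only [hb_def, hb₀_def, Sum.elim_inr, Sum.elim_inl, hx₀_def, hu_def]
      split_ifs <;> norm_num
    · rw [hmv4]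
      simp only [hb_def, hb₀_def, Sum.elim_inr, hx₀_def]
      split_ifs <;> norm_num
  have hpos : ∀ w : Fin m → ℚ, w ≠ 0 → ∃ jj, 0 < G.mulVec w jj := by
    intro w hw
    obtain ⟨i, hi⟩ := Function.ne_iff.mp hw
    rcases lt_or_gt_of_ne (by simpa using hi) with h | h
    · exact ⟨Sum.inr (Sum.inr i), by rw [hmv4]; linarith⟩
    · exact ⟨Sum.inr (Sum.inl i), by rw [hmv3]; linarith⟩
  obtain ⟨y, hyfeas, hyker⟩ := purify G b hpos (Fintype.card ((Fin n ⊕ Fin n) ⊕ (Fin m ⊕ Fin m)))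
    x₀ hx₀feas ((Finset.card_filter_le _ _).trans_eq Finset.card_univ)
  -- tight subtype
  set T := {jj // G.mulVec y jj = b jj} with hT_def
  set M : Matrix T (Fin m) ℚ := G.submatrix Subtype.val id with hM_def
  have hMmv : ∀ (x : Fin m → ℚ) (tt : T), M.mulVec x tt = G.mulVec x tt.val := by
    intro x tt; simp [hM_def, Matrix.mulVec, dotProduct]; rfl
  have hMker : ∀ w : Fin m → ℚ, M.mulVec w = 0 → w = 0 := by
    intro w hw
    apply hyker
    intro jj hjj
    have := congrFun hw ⟨jj, hjj⟩
    rwa [hMmv] at this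
  obtain ⟨f, hfunit⟩ := exists_rows_basis M hMker
  set f' : Fin m → (Fin n ⊕ Fin n) ⊕ (Fin m ⊕ Fin m) := fun i => (f i).val with hf'_def
  have htightf : ∀ i, G.mulVec y (f' i) = b (f' i) := fun i => (f i).2
  set Q : Matrix (Fin m) (Fin m) ℤ := G₀.submatrix f' id with hQ_def
  have hQcast : M.submatrix f id = Q.map (Int.cast : ℤ → ℚ) := by
    ext i j; simp [hM_def, hQ_def, hG_def, hf'_def]
  -- det of Q is ±1
  have hdcast : ((Q.det : ℤ) : ℚ) = (Q.map (Int.cast : ℤ → ℚ)).det := by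
    simpa using RingHom.map_det (Int.castRingHom ℚ) Q
  have hdetQne : Q.det ≠ 0 := by
    intro h0
    have : (M.submatrix f id).det = 0 := by
      rw [hQcast, ← hdcast, h0]; simp
    exact ((Matrix.isUnit_iff_isUnit_det _).mp hfunit).ne_zero this
  have hdetQ : IsUnit Q.det := by
    obtain ⟨sg, hsg⟩ := (Matrix.isTotallyUnimodular_iff G₀).mp (G0_TU hTU') m f' id
    have hsg' : ((sg : ℤ) : ℤ) = Q.det := hsg
    rw [Int.isUnit_iff]
    rcases sg with _ | _ | _
    · exfalso; apply hdetQne; rw [← hsg']; simp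
    · right; rw [← hsg']; simp
    · left; rw [← hsg']; simp
  -- integral solution z
  set z : Fin m → ℤ := Q⁻¹.mulVec (fun i => b₀ (f' i)) with hz_def
  have hQz : Q.mulVec z = fun i => b₀ (f' i) := by
    rw [hz_def, Matrix.mulVec_mulVec, Matrix.mul_nonsing_inv _ hdetQ, Matrix.one_mulVec]
  have hycast : y = fun i => ((z i : ℤ) : ℚ) := by
    have hunit : IsUnit (Q.map (Int.cast : ℤ → ℚ)) := hQcast ▸ hfunit
    apply Matrix.mulVec_injective_iff_isUnit.mpr hunit
    have h1 : (Q.map (Int.cast : ℤ → ℚ)).mulVec y = fun i => b (f' i) := by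
      funext i
      have : (Q.map (Int.cast : ℤ → ℚ)).mulVec y i = G.mulVec y (f' i) := by
        simp [hQ_def, hG_def, Matrix.mulVec, dotProduct]
      rw [this, htightf]
    have h2 : (Q.map (Int.cast : ℤ → ℚ)).mulVec (fun i => ((z i : ℤ) : ℚ)) =
        fun i => b (f' i) := by
      funext i
      have hcomm : (Q.map (Int.cast : ℤ → ℚ)).mulVec (fun i => ((z i : ℤ) : ℚ)) i
          = ((Q.mulVec z i : ℤ) : ℚ) := by
        simp [Matrix.mulVec, dotProduct]
      rw [hcomm, hQz, hb_def]
    rw [h1, h2]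
  -- integer constraints
  have hzbound : ∀ i : Fin m, 0 ≤ z i ∧ z i ≤ u i := by
    intro i
    constructor
    · have := hyfeas (Sum.inr (Sum.inr i))
      rw [hmv4, hycast] at this
      simp only [hb_def, hb₀_def, Sum.elim_inr] at this
      exact_mod_cast neg_nonpos.mp (le_trans this (by norm_num))
    · have := hyfeas (Sum.inr (Sum.inl i))
      rw [hmv3, hycast] at this
      simp only [hb_def, hb₀_def, Sum.elim_inr, Sum.elim_inl] at this
      exact_mod_cast this
  have hzzero : ∀ i ∉ I, z i = 0 := by
    intro i hi
    have := hzbound i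
    rw [hu_def] at this
    simp [hi] at this
    omega
  have hzcol : ∀ j : Fin n, q j ≤ ∑ i ∈ I, A i j * z i ∧ ∑ i ∈ I, A i j * z i ≤ q j + r j := by
    intro j
    have hWsum : ∑ i, (A i j : ℚ) * ((z i : ℤ) : ℚ) = ((∑ i ∈ I, A i j * z i : ℤ) : ℚ) := by
      push_cast
      rw [← Finset.sum_subset (Finset.subset_univ I)
        (fun i _ hi => by rw [hzzero i hi]; push_cast; ring)]
    constructor
    · have := hyfeas (Sum.inl (Sum.inr j))
      rw [hmv2, hycast] at this
      simp only [hb_def, hb₀_def, Sum.elim_inl, Sum.elim_inr] at this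
      rw [hWsum] at this
      have h2 : ((q j : ℤ) : ℚ) ≤ ((∑ i ∈ I, A i j * z i : ℤ) : ℚ) := by push_cast at this ⊢; linarith
      exact_mod_cast h2
    · have := hyfeas (Sum.inl (Sum.inl j))
      rw [hmv1, hycast] at this
      simp only [hb_def, hb₀_def, Sum.elim_inl] at this
      rw [hWsum] at this
      exact_mod_cast this
  -- conclusion
  refine ⟨I.filter (fun i => z i = 1), Finset.filter_subset _ _, ?_⟩
  intro j
  have hWeq : ∑ i ∈ I.filter (fun i => z i = 1), A i j = ∑ i ∈ I, A i j * z i := by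
    rw [Finset.sum_filter]
    apply Finset.sum_congr rfl
    intro i hi
    have h1 := hzbound i
    rw [hu_def] at h1
    simp only [hi, if_true] at h1
    by_cases h : z i = 1 <;> simp [h]
    · omega
  have hsd : ∑ i ∈ I \ I.filter (fun i => z i = 1), A i j
      = s j - ∑ i ∈ I.filter (fun i => z i = 1), A i j := by
    rw [hs_def, eq_sub_iff_add_eq, Finset.sum_sdiff (Finset.filter_subset _ _)]
  rw [hsd, hWeq]
  obtain ⟨h1, h2, h3⟩ := hqr j
  obtain ⟨h4, h5⟩ := hzcol j
  simp only [Set.mem_insert_iff, Set.mem_singleton_iff]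
  omega
end

section
/- Let f: ℝⁿ × ℝⁿ → ℝ be defined by f(λ, τ) = Σ_{i,j} exp(λ_i + τ_j − M_{ij}) for a fixed matrix M ∈ ℝ^{n×n} satisfying M_{ij} ≥ 0. Then on the region where f(λ, τ) ≤ 1, the gradient map (λ,τ) ↦ (r(B), l(B)) with B_{ij} = exp(λ_i + τ_j − M_{ij}), r(B) = B1ₙ, l(B) = Bᵀ1ₙ, is 4-Lipschitz in the Euclidean norm: ‖(r(B) − r(B'), l(B) − l(B'))‖ ≤ 4‖(λ − λ', τ − τ')‖ for any two points (λ,τ), (λ',τ') in that region. -/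
open Finset Real

private lemma exp_diff_le (x y : ℝ) (h : y ≤ x) :
    Real.exp x - Real.exp y ≤ (Real.exp x + Real.exp y) * (x - y) := by
  have h2 : (y - x) + 1 ≤ Real.exp (y - x) := Real.add_one_le_exp _
  have h3 : Real.exp (y - x) * Real.exp x = Real.exp y := by
    rw [← Real.exp_add]; ring_nf
  nlinarith [Real.exp_pos x, Real.exp_pos y,
    mul_le_mul_of_nonneg_right h2 (Real.exp_pos x).le]

private lemma abs_exp_diff_le (x y : ℝ) :
    |Real.exp x - Real.exp y| ≤ (Real.exp x + Real.exp y) * |x - y| := by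
  rcases le_total y x with h | h
  · rw [abs_of_nonneg (by linarith [Real.exp_le_exp.2 h]),
      abs_of_nonneg (by linarith)]
    exact exp_diff_le x y h
  · rw [abs_of_nonpos (by linarith [Real.exp_le_exp.2 h]),
      abs_of_nonpos (by linarith)]
    have := exp_diff_le y x h
    nlinarith

private lemma cs_weighted {n : ℕ} (w c : Fin n → ℝ) (hw : ∀ j, 0 ≤ w j)
    (hs : ∑ j, w j ≤ 2) :
    (∑ j, w j * c j) ^ 2 ≤ 2 * ∑ j, w j * c j ^ 2 := by
  have h := Finset.sum_mul_sq_le_sq_mul_sq Finset.univ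
    (fun j => Real.sqrt (w j)) (fun j => Real.sqrt (w j) * c j)
  have e1 : ∀ j, Real.sqrt (w j) * (Real.sqrt (w j) * c j) = w j * c j := by
    intro j; rw [← mul_assoc, Real.mul_self_sqrt (hw j)]
  have e2 : ∀ j, Real.sqrt (w j) ^ 2 = w j := fun j => Real.sq_sqrt (hw j)
  have e3 : ∀ j, (Real.sqrt (w j) * c j) ^ 2 = w j * c j ^ 2 := by
    intro j; rw [mul_pow, Real.sq_sqrt (hw j)]
  simp only [e1, e2, e3] at h
  have hnn : 0 ≤ ∑ j, w j * c j ^ 2 :=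
    Finset.sum_nonneg fun j _ => mul_nonneg (hw j) (sq_nonneg _)
  nlinarith

private lemma key_bound {n : ℕ} (A B : Fin n → Fin n → ℝ) (dL dT : Fin n → ℝ)
    (hAB : ∀ i j, |A i j - B i j| ≤ (A i j + B i j) * |dL i + dT j|)
    (hS : ∀ i j, 0 ≤ A i j + B i j)
    (hrow : ∀ i, ∑ j, (A i j + B i j) ≤ 2) :
    ∑ i, ((∑ j, A i j) - ∑ j, B i j) ^ 2
      ≤ 4 * ∑ i, ∑ j, (A i j + B i j) * (dL i ^ 2 + dT j ^ 2) := by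
  rw [Finset.mul_sum]
  apply Finset.sum_le_sum
  intro i _
  have habs : |(∑ j, A i j) - ∑ j, B i j|
      ≤ ∑ j, (A i j + B i j) * |dL i + dT j| := by
    rw [← Finset.sum_sub_distrib]
    refine (Finset.abs_sum_le_sum_abs _ _).trans (Finset.sum_le_sum fun j _ => hAB i j)
  have hrhs : 0 ≤ ∑ j, (A i j + B i j) * |dL i + dT j| :=
    Finset.sum_nonneg fun j _ => mul_nonneg (hS i j) (abs_nonneg _)
  have h1 : ((∑ j, A i j) - ∑ j, B i j) ^ 2
      ≤ (∑ j, (A i j + B i j) * |dL i + dT j|) ^ 2 := by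
    rw [← sq_abs]
    exact pow_le_pow_left₀ (abs_nonneg _) habs 2
  have h2 := cs_weighted (fun j => A i j + B i j) (fun j => |dL i + dT j|)
    (hS i) (hrow i)
  have h3 : ∑ j, (A i j + B i j) * |dL i + dT j| ^ 2
      ≤ ∑ j, (A i j + B i j) * (2 * (dL i ^ 2 + dT j ^ 2)) := by
    apply Finset.sum_le_sum
    intro j _
    apply mul_le_mul_of_nonneg_left _ (hS i j)
    rw [sq_abs]
    nlinarith [sq_nonneg (dL i - dT j)]
  calc ((∑ j, A i j) - ∑ j, B i j) ^ 2
      ≤ (∑ j, (A i j + B i j) * |dL i + dT j|) ^ 2 := h1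
    _ ≤ 2 * ∑ j, (A i j + B i j) * |dL i + dT j| ^ 2 := h2
    _ ≤ 2 * ∑ j, (A i j + B i j) * (2 * (dL i ^ 2 + dT j ^ 2)) := by linarith
    _ = 4 * ∑ j, (A i j + B i j) * (dL i ^ 2 + dT j ^ 2) := by
        rw [Finset.mul_sum, Finset.mul_sum]
        apply Finset.sum_congr rfl; intro j _; ring

open Finset Real in
/-- Lipschitz continuity of the marginal (gradient) map of the dual entropic OT
objective on the sublevel region `f(λ, τ) ≤ 1`, with constant `4`. -/
theorem marginal_map_lipschitz {n : ℕ} (M : Matrix (Fin n) (Fin n) ℝ)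
    (hM : ∀ i j, 0 ≤ M i j)
    (lam tau lam' tau' : Fin n → ℝ)
    (hf : ∑ i, ∑ j, exp (lam i + tau j - M i j) ≤ 1)
    (hf' : ∑ i, ∑ j, exp (lam' i + tau' j - M i j) ≤ 1) :
    Real.sqrt ((∑ i, ((∑ j, exp (lam i + tau j - M i j))
                        - ∑ j, exp (lam' i + tau' j - M i j)) ^ 2)
             + ∑ j, ((∑ i, exp (lam i + tau j - M i j))
                        - ∑ i, exp (lam' i + tau' j - M i j)) ^ 2)
      ≤ 4 * Real.sqrt ((∑ i, (lam i - lam' i) ^ 2) + ∑ j, (tau j - tau' j) ^ 2) := by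
  set a : Fin n → Fin n → ℝ := fun i j => exp (lam i + tau j - M i j) with ha
  set b : Fin n → Fin n → ℝ := fun i j => exp (lam' i + tau' j - M i j) with hb
  set dL : Fin n → ℝ := fun i => lam i - lam' i with hdL
  set dT : Fin n → ℝ := fun j => tau j - tau' j with hdT
  have hSnn : ∀ i j, 0 ≤ a i j + b i j := fun i j => by positivity
  have hABt : ∀ i j, |a i j - b i j| ≤ (a i j + b i j) * |dL i + dT j| := by
    intro i j
    have := abs_exp_diff_le (lam i + tau j - M i j) (lam' i + tau' j - M i j)
    have heq : (lam i + tau j - M i j) - (lam' i + tau' j - M i j) = dL i + dT j := by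
      simp only [hdL, hdT]; ring
    rwa [heq] at this
  have htot : ∑ i, ∑ j, (a i j + b i j) ≤ 2 := by
    have : ∑ i, ∑ j, (a i j + b i j)
        = (∑ i, ∑ j, a i j) + ∑ i, ∑ j, b i j := by
      rw [← Finset.sum_add_distrib]
      apply Finset.sum_congr rfl; intro i _; rw [← Finset.sum_add_distrib]
    rw [this]; linarith
  have hrow : ∀ i, ∑ j, (a i j + b i j) ≤ 2 := by
    intro i
    refine le_trans ?_ htot
    exact Finset.single_le_sum
      (fun i _ => Finset.sum_nonneg fun j _ => hSnn i j) (Finset.mem_univ i)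
  have hcol : ∀ j, ∑ i, (a i j + b i j) ≤ 2 := by
    intro j
    have hswap : ∑ j, ∑ i, (a i j + b i j) ≤ 2 := by
      rw [Finset.sum_comm]; exact htot
    refine le_trans ?_ hswap
    exact Finset.single_le_sum
      (fun j _ => Finset.sum_nonneg fun i _ => hSnn i j) (Finset.mem_univ j)
  set D2 : ℝ := (∑ i, dL i ^ 2) + ∑ j, dT j ^ 2 with hD2
  have hD2nn : 0 ≤ D2 := by
    apply add_nonneg <;> exact Finset.sum_nonneg fun _ _ => sq_nonneg _
  -- the key double sum
  set T : ℝ := ∑ i, ∑ j, (a i j + b i j) * (dL i ^ 2 + dT j ^ 2) with hT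
  have hTle : T ≤ 2 * D2 := by
    have hsplit : T = (∑ i, dL i ^ 2 * ∑ j, (a i j + b i j))
        + ∑ j, dT j ^ 2 * ∑ i, (a i j + b i j) := by
      rw [hT]
      have : ∀ i, ∑ j, (a i j + b i j) * (dL i ^ 2 + dT j ^ 2)
          = dL i ^ 2 * (∑ j, (a i j + b i j))
            + ∑ j, (a i j + b i j) * dT j ^ 2 := by
        intro i
        rw [Finset.mul_sum, ← Finset.sum_add_distrib]
        apply Finset.sum_congr rfl; intro j _; ring
      simp only [this]
      rw [Finset.sum_add_distrib]
      congr 1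
      rw [Finset.sum_comm]
      apply Finset.sum_congr rfl; intro j _
      rw [Finset.mul_sum]
      apply Finset.sum_congr rfl; intro i _; ring
    rw [hsplit, hD2]
    have h1 : ∑ i, dL i ^ 2 * ∑ j, (a i j + b i j) ≤ ∑ i, dL i ^ 2 * 2 :=
      Finset.sum_le_sum fun i _ =>
        mul_le_mul_of_nonneg_left (hrow i) (sq_nonneg _)
    have h2 : ∑ j, dT j ^ 2 * ∑ i, (a i j + b i j) ≤ ∑ j, dT j ^ 2 * 2 :=
      Finset.sum_le_sum fun j _ =>
        mul_le_mul_of_nonneg_left (hcol j) (sq_nonneg _)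
    have e1 : ∑ i, dL i ^ 2 * 2 = 2 * ∑ i, dL i ^ 2 := by
      rw [Finset.mul_sum]; apply Finset.sum_congr rfl; intro i _; ring
    have e2 : ∑ j, dT j ^ 2 * 2 = 2 * ∑ j, dT j ^ 2 := by
      rw [Finset.mul_sum]; apply Finset.sum_congr rfl; intro j _; ring
    linarith
  have hrowsq : ∑ i, ((∑ j, a i j) - ∑ j, b i j) ^ 2 ≤ 4 * T :=
    key_bound a b dL dT hABt hSnn hrow
  have hcolsq : ∑ j, ((∑ i, a i j) - ∑ i, b i j) ^ 2 ≤ 4 * T := by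
    have h := key_bound (fun j i => a i j) (fun j i => b i j) dT dL
      (fun j i => by
        have := hABt i j
        have e : dL i + dT j = dT j + dL i := by ring
        rwa [e] at this)
      (fun j i => hSnn i j) hcol
    refine h.trans ?_
    have : ∑ j, ∑ i, (a i j + b i j) * (dT j ^ 2 + dL i ^ 2) = T := by
      rw [hT, Finset.sum_comm]
      apply Finset.sum_congr rfl; intro i _
      apply Finset.sum_congr rfl; intro j _; ring
    rw [this]
  have hL : (∑ i, ((∑ j, a i j) - ∑ j, b i j) ^ 2)
      + ∑ j, ((∑ i, a i j) - ∑ i, b i j) ^ 2 ≤ 16 * D2 := by linarith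
  calc Real.sqrt ((∑ i, ((∑ j, a i j) - ∑ j, b i j) ^ 2)
        + ∑ j, ((∑ i, a i j) - ∑ i, b i j) ^ 2)
      ≤ Real.sqrt (16 * D2) := Real.sqrt_le_sqrt hL
    _ = 4 * Real.sqrt D2 := by
        rw [Real.sqrt_mul (by norm_num : (0:ℝ) ≤ 16)]
        congr 1
        rw [show (16:ℝ) = 4 ^ 2 by norm_num, Real.sqrt_sq (by norm_num : (0:ℝ) ≤ 4)]
end

section
/- Let a_t ≥ 0 and θ_t > 0 satisfy a_{t+1}(1 − θ_{t+1})/θ_{t+1}² ≤ a_t(1 − θ_t)/θ_t² + c_t − c_{t+1} for all t ≥ 0, where c_t ≥ 0, θ_0 = 1, and 1/θ_t² = (1 − θ_{t+1})/θ_{t+1}². Then for all t ≥ 1, a_t ≤ θ_{t−1}² c_0 ≤ 4c_0/(t+1)², assuming additionally 0 < θ_t ≤ 2/(t+2). -/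
/-- Telescoping argument for accelerated rates: if
`a_{t+1}(1-θ_{t+1})/θ_{t+1}² ≤ a_t(1-θ_t)/θ_t² + c_t - c_{t+1}` with `θ₀ = 1`,
`1/θ_t² = (1-θ_{t+1})/θ_{t+1}²`, and `0 < θ_t ≤ 2/(t+2)`, then
`a_t ≤ θ_{t-1}² c₀ ≤ 4 c₀/(t+1)²` for every `t ≥ 1`. -/
theorem accelerated_telescoping (a θ c : ℕ → ℝ)
    (ha : ∀ t, 0 ≤ a t) (hθpos : ∀ t, 0 < θ t) (hc : ∀ t, 0 ≤ c t)
    (hθ0 : θ 0 = 1)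
    (hθrec : ∀ t, 1 / (θ t) ^ 2 = (1 - θ (t + 1)) / (θ (t + 1)) ^ 2)
    (hθub : ∀ t, θ t ≤ 2 / ((t : ℝ) + 2))
    (hrec : ∀ t, a (t + 1) * (1 - θ (t + 1)) / (θ (t + 1)) ^ 2
      ≤ a t * (1 - θ t) / (θ t) ^ 2 + c t - c (t + 1)) :
    ∀ t : ℕ, 1 ≤ t →
      a t ≤ (θ (t - 1)) ^ 2 * c 0 ∧
        (θ (t - 1)) ^ 2 * c 0 ≤ 4 * c 0 / ((t : ℝ) + 1) ^ 2 := by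
  -- Key invariant: b t := a t * (1-θ t)/θ t ^ 2 + c t ≤ c 0
  have hb : ∀ t, a t * (1 - θ t) / (θ t) ^ 2 + c t ≤ c 0 := by
    intro t
    induction t with
    | zero => simp [hθ0]
    | succ s ih =>
      have := hrec s
      linarith
  rintro t ht
  obtain ⟨s, rfl⟩ : ∃ s, t = s + 1 := ⟨t - 1, (Nat.succ_pred_eq_of_pos ht).symm⟩
  simp only [Nat.add_sub_cancel]
  have hθs := hθpos s
  have hθs2 : (0:ℝ) < (θ s) ^ 2 := by positivity
  constructor
  · have h1 : a (s + 1) * (1 / (θ s) ^ 2) ≤ c 0 := by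
      have := hb (s + 1)
      have hr := hθrec s
      have hcs := hc (s + 1)
      calc a (s + 1) * (1 / (θ s) ^ 2)
          = a (s + 1) * (1 - θ (s + 1)) / (θ (s + 1)) ^ 2 := by
            rw [hr]; ring
        _ ≤ c 0 := by linarith
    rw [mul_one_div, div_le_iff₀ hθs2] at h1
    linarith [h1]
  · have hub := hθub s
    have hden : (0:ℝ) < ((s:ℝ) + 1 + 1) ^ 2 := by positivity
    have hc0 := hc 0
    have hθle : (θ s) ^ 2 ≤ (2 / ((s:ℝ) + 2)) ^ 2 := by
      apply pow_le_pow_left₀ hθs.le hub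
    have : (2 / ((s:ℝ) + 2)) ^ 2 = 4 / ((s:ℝ) + 2) ^ 2 := by
      rw [div_pow]; norm_num
    push_cast
    calc (θ s) ^ 2 * c 0 ≤ 4 / ((s:ℝ) + 2) ^ 2 * c 0 := by
          apply mul_le_mul_of_nonneg_right _ hc0
          rw [← this]; exact hθle
      _ = 4 * c 0 / ((s:ℝ) + 1 + 1) ^ 2 := by ring_nf
end
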